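/- Let A, B ∈ ℝ^{n×n} be symmetric with eigenvalues λ_1(A) ≥ ... ≥ λ_n(A) and λ_1(B) ≥ ... ≥ λ_n(B). Then ‖A − B‖_F ≥ sqrt(Σ_{i=1}^{n} (λ_i(A) − λ_i(B))²) (Hoffman–Wielandt type inequality with ordered eigenvalues). -/
import Mathlib


open Matrix Real Finset

/-- Squared Frobenius norm of a real square matrix. -/
def frobSq {n : ℕ} (A : Matrix (Fin n) (Fin n) ℝ) : ℝ := ∑ i, ∑ j, (A i j)^2

/-- A matrix is Toeplitz if its entries are constant along diagonals. -/
def IsToeplitz {n : ℕ} (A : Matrix (Fin n) (Fin n) ℝ) : Prop :=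
  ∀ i j i' j' : Fin n, (i : ℤ) - (j : ℤ) = (i' : ℤ) - (j' : ℤ) → A i j = A i' j'

/-- The (2k+1)-banded Toeplitz matrix (n;k;σ,δ,τ): subdiagonals σ₁,…,σ_k,
diagonal δ, superdiagonals τ₁,…,τ_k. -/
def bandedToeplitz (n k : ℕ) (σ τ : ℕ → ℝ) (δ : ℝ) : Matrix (Fin n) (Fin n) ℝ :=
  Matrix.of fun i j =>
    if (i : ℕ) = (j : ℕ) then δ
    else if (j : ℕ) < (i : ℕ) ∧ (i : ℕ) - (j : ℕ) ≤ k then σ ((i : ℕ) - (j : ℕ))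
    else if (i : ℕ) < (j : ℕ) ∧ (j : ℕ) - (i : ℕ) ≤ k then τ ((j : ℕ) - (i : ℕ))
    else 0

/-- The tridiagonal Toeplitz matrix (n;1;σ₁,δ,τ₁). -/
def triToeplitz (n : ℕ) (σ₁ δ τ₁ : ℝ) : Matrix (Fin n) (Fin n) ℝ :=
  bandedToeplitz n 1 (fun _ => σ₁) (fun _ => τ₁) δ

section aux
variable {n : ℕ}

lemma frobSq_eq_trace (M : Matrix (Fin n) (Fin n) ℝ) : frobSq M = trace (M * Mᵀ) := by
  simp [frobSq, trace, mul_apply, sq]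

lemma trace_diag_conj (a b : Fin n → ℝ) (W : Matrix (Fin n) (Fin n) ℝ) :
    trace (diagonal a * W * diagonal b * star W) = ∑ i, ∑ j, (W i j)^2 * (a i * b j) := by
  have hst : (star W : Matrix (Fin n) (Fin n) ℝ) = Wᵀ := by
    ext i j; simp [Matrix.star_eq_conjTranspose, conjTranspose_apply]
  rw [hst]
  simp [trace, mul_apply, diagonal, Finset.mul_sum, Finset.sum_mul]
  refine Finset.sum_congr rfl fun i _ => Finset.sum_congr rfl fun j _ => by ring

lemma trace_spectral (U V : Matrix (Fin n) (Fin n) ℝ)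
    (a b : Fin n → ℝ) :
    trace ((U * diagonal a * star U) * (V * diagonal b * star V))
    = ∑ i, ∑ j, ((star U * V) i j)^2 * (a i * b j) := by
  have h1 : (U * diagonal a * star U) * (V * diagonal b * star V)
      = U * (diagonal a * (star U * (V * (diagonal b * star V)))) := by
    simp only [Matrix.mul_assoc]
  rw [h1, trace_mul_comm]
  have h2 : diagonal a * (star U * (V * (diagonal b * star V))) * U
      = diagonal a * (star U * V) * diagonal b * star (star U * V) := by
    rw [Matrix.star_mul, star_star]
    simp only [Matrix.mul_assoc]
  rw [h2, trace_diag_conj]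

lemma monovary_of_antitone {μ ν : Fin n → ℝ} (hμ : Antitone μ) (hν : Antitone ν) :
    Monovary μ ν :=
  fun i j h => hμ (le_of_not_gt fun hji => absurd (hν hji.le) (not_le.2 h))

lemma ds_sum_le {S : Matrix (Fin n) (Fin n) ℝ} (hS : S ∈ doublyStochastic ℝ (Fin n))
    {μ ν : Fin n → ℝ} (hμ : Antitone μ) (hν : Antitone ν) :
    ∑ i, ∑ j, S i j * (μ i * ν j) ≤ ∑ i, μ i * ν i := by
  obtain ⟨w, hw0, hw1, hwS⟩ := exists_eq_sum_perm_of_mem_doublyStochastic hS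
  have hentry : ∀ i j, S i j = ∑ σ : Equiv.Perm (Fin n), w σ * (if σ i = j then 1 else 0) := by
    intro i j
    rw [← hwS]
    simp [Matrix.sum_apply, Equiv.Perm.permMatrix, PEquiv.toMatrix_apply, Equiv.toPEquiv_apply]
  have key : ∑ i, ∑ j, S i j * (μ i * ν j)
      = ∑ σ : Equiv.Perm (Fin n), w σ * ∑ i, μ i * ν (σ i) := by
    have h1 : ∀ i j, S i j * (μ i * ν j)
        = ∑ σ : Equiv.Perm (Fin n), (if σ i = j then w σ * (μ i * ν (σ i)) else 0) := by
      intro i j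
      rw [hentry i j, Finset.sum_mul]
      refine Finset.sum_congr rfl fun σ _ => ?_
      by_cases h : σ i = j
      · rw [if_pos h, if_pos h, h]; ring
      · rw [if_neg h, if_neg h]; ring
    simp_rw [h1]
    calc ∑ i, ∑ j, ∑ σ : Equiv.Perm (Fin n), (if σ i = j then w σ * (μ i * ν (σ i)) else 0)
        = ∑ i, ∑ σ : Equiv.Perm (Fin n), ∑ j, (if σ i = j then w σ * (μ i * ν (σ i)) else 0) :=
          Finset.sum_congr rfl fun i _ => Finset.sum_comm
      _ = ∑ σ : Equiv.Perm (Fin n), ∑ i, ∑ j, (if σ i = j then w σ * (μ i * ν (σ i)) else 0) :=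
          Finset.sum_comm
      _ = ∑ σ : Equiv.Perm (Fin n), ∑ i, w σ * (μ i * ν (σ i)) := by
          refine Finset.sum_congr rfl fun σ _ => Finset.sum_congr rfl fun i _ => ?_
          simp
      _ = ∑ σ : Equiv.Perm (Fin n), w σ * ∑ i, μ i * ν (σ i) := by
          refine Finset.sum_congr rfl fun σ _ => ?_
          rw [Finset.mul_sum]
  rw [key]
  calc ∑ σ : Equiv.Perm (Fin n), w σ * ∑ i, μ i * ν (σ i)
      ≤ ∑ σ : Equiv.Perm (Fin n), w σ * ∑ i, μ i * ν i := by
        refine Finset.sum_le_sum fun σ _ => mul_le_mul_of_nonneg_left ?_ (hw0 σ)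
        simpa using (monovary_of_antitone hμ hν).sum_smul_comp_perm_le_sum_smul (σ := σ)
    _ = ∑ i, μ i * ν i := by rw [← Finset.sum_mul, hw1, one_mul]

end aux


/-- Hoffman–Wielandt-type inequality: for symmetric `A`, `B` with
eigenvalues listed in nonincreasing order, `‖A − B‖_F ≥ sqrt(Σ (λ_i(A) − λ_i(B))²)`. -/
theorem hoffman_wielandt_ordered {n : ℕ} (A B : Matrix (Fin n) (Fin n) ℝ)
    (hA : A.IsHermitian) (hB : B.IsHermitian) (μ ν : Fin n → ℝ)
    (eA eB : Equiv.Perm (Fin n))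
    (hμ : μ = hA.eigenvalues ∘ eA) (hν : ν = hB.eigenvalues ∘ eB)
    (hμa : Antitone μ) (hνa : Antitone ν) :
    Real.sqrt (frobSq (A - B)) ≥ Real.sqrt (∑ i, (μ i - ν i)^2) := by
  apply Real.sqrt_le_sqrt
  have specA : A = (hA.eigenvectorUnitary : Matrix (Fin n) (Fin n) ℝ) * diagonal hA.eigenvalues
      * star (hA.eigenvectorUnitary : Matrix (Fin n) (Fin n) ℝ) := by
    simpa using hA.spectral_theorem
  have specB : B = (hB.eigenvectorUnitary : Matrix (Fin n) (Fin n) ℝ) * diagonal hB.eigenvalues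
      * star (hB.eigenvectorUnitary : Matrix (Fin n) (Fin n) ℝ) := by
    simpa using hB.spectral_theorem
  set U : Matrix (Fin n) (Fin n) ℝ := (hA.eigenvectorUnitary : Matrix (Fin n) (Fin n) ℝ) with hU
  set V : Matrix (Fin n) (Fin n) ℝ := (hB.eigenvectorUnitary : Matrix (Fin n) (Fin n) ℝ) with hV
  set a : Fin n → ℝ := hA.eigenvalues with ha
  set b : Fin n → ℝ := hB.eigenvalues with hb
  have hUl : star U * U = 1 := Unitary.coe_star_mul_self hA.eigenvectorUnitary
  have hUr : U * star U = 1 := Unitary.coe_mul_star_self hA.eigenvectorUnitary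
  have hVl : star V * V = 1 := Unitary.coe_star_mul_self hB.eigenvectorUnitary
  have hVr : V * star V = 1 := Unitary.coe_mul_star_self hB.eigenvectorUnitary
  set W : Matrix (Fin n) (Fin n) ℝ := star U * V with hW
  have hWW : W * star W = 1 := by
    rw [hW, Matrix.star_mul, star_star, Matrix.mul_assoc, ← Matrix.mul_assoc V,
      hVr, Matrix.one_mul, hUl]
  have hWW' : star W * W = 1 := by
    rw [hW, Matrix.star_mul, star_star, Matrix.mul_assoc, ← Matrix.mul_assoc U,
      hUr, Matrix.one_mul, hVl]
  have hAA : trace (A * A) = ∑ i, (μ i)^2 := by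
    have hsum : ∑ i, (μ i)^2 = ∑ i, (a i)^2 := by
      rw [hμ]; exact Equiv.sum_comp eA (fun i => (a i)^2)
    rw [specA, trace_spectral, hUl, hsum]
    simp [Matrix.one_apply, sq]
  have hBB : trace (B * B) = ∑ i, (ν i)^2 := by
    have hsum : ∑ i, (ν i)^2 = ∑ i, (b i)^2 := by
      rw [hν]; exact Equiv.sum_comp eB (fun i => (b i)^2)
    rw [specB, trace_spectral, hVl, hsum]
    simp [Matrix.one_apply, sq]
  set S : Matrix (Fin n) (Fin n) ℝ := Matrix.of (fun k l => (W (eA k) (eB l))^2) with hS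
  have rowsum : ∀ i : Fin n, ∑ j, (W i j)^2 = 1 := by
    intro i
    have h := congrFun (congrFun hWW i) i
    simpa [Matrix.mul_apply, Matrix.one_apply, Matrix.star_eq_conjTranspose,
      conjTranspose_apply, sq] using h
  have colsum : ∀ j : Fin n, ∑ i, (W i j)^2 = 1 := by
    intro j
    have h := congrFun (congrFun hWW' j) j
    simpa [Matrix.mul_apply, Matrix.one_apply, Matrix.star_eq_conjTranspose,
      conjTranspose_apply, sq] using h
  have hSds : S ∈ doublyStochastic ℝ (Fin n) := by
    rw [mem_doublyStochastic_iff_sum]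
    refine ⟨fun i j => sq_nonneg _, fun i => ?_, fun j => ?_⟩
    · rw [show ∑ j, S i j = ∑ j, (W (eA i) (eB j))^2 from rfl,
        Equiv.sum_comp eB (fun j => (W (eA i) j)^2)]
      exact rowsum _
    · rw [show ∑ i, S i j = ∑ i, (W (eA i) (eB j))^2 from rfl,
        Equiv.sum_comp eA (fun i => (W i (eB j))^2)]
      exact colsum _
  have hAB : trace (A * B) ≤ ∑ i, μ i * ν i := by
    rw [specA, specB, trace_spectral]
    have hre : ∑ i, ∑ j, ((star U * V) i j)^2 * (a i * b j)
        = ∑ k, ∑ l, S k l * (μ k * ν l) := by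
      rw [← Equiv.sum_comp eA (fun i => ∑ j, ((star U * V) i j)^2 * (a i * b j))]
      refine Finset.sum_congr rfl fun k _ => ?_
      rw [← Equiv.sum_comp eB (fun j => ((star U * V) (eA k) j)^2 * (a (eA k) * b j))]
      refine Finset.sum_congr rfl fun l _ => ?_
      simp [hS, hμ, hν, hW]
    rw [hre]
    exact ds_sum_le hSds hμa hνa
  have expand : frobSq (A - B) = trace (A * A) + trace (B * B) - 2 * trace (A * B) := by
    rw [frobSq_eq_trace]
    have hsym : (A - B)ᵀ = A - B := by
      rw [transpose_sub, show Aᵀ = A from hA, show Bᵀ = B from hB]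
    rw [hsym, sub_mul, mul_sub, mul_sub, trace_sub, trace_sub, trace_sub,
      trace_mul_comm B A]
    ring
  have final : ∑ i, (μ i - ν i)^2 = ∑ i, (μ i)^2 + ∑ i, (ν i)^2 - 2 * ∑ i, μ i * ν i := by
    rw [← Finset.sum_add_distrib, Finset.mul_sum, ← Finset.sum_sub_distrib]
    exact Finset.sum_congr rfl fun i _ => by ring
  rw [expand, hAA, hBB, final]
  linarith
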